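/- Fix r > 0 and the setup of Φ[a,b,c,d]. For real numbers θ₁, θ₂, θ₃, θ₄ and α_j = r e^{iθ_j}, the 4×4 matrix M whose j-th row is y_{α_j}ᵀ satisfies det(M) = K · e^{i(θ₁+θ₂+θ₃+θ₄)/2} · ∏_{1≤i<j≤4} sin((θ_i - θ_j)/2), where K = 64 a c √(acd) r⁴ (c+d)(c + d r²)(c(c+d) + d(abc + d)r²)/(ab-1)². -/

import Mathlib

private lemma det_fin_four' (A : Matrix (Fin 4) (Fin 4) ℂ) :
    A.det =
  A 0 0 * (A 1 1*A 2 2*A 3 3 - A 1 1*A 2 3*A 3 2 - A 1 2*A 2 1*A 3 3 + A 1 2*A 2 3*A 3 1 + A 1 3*A 2 1*A 3 2 - A 1 3*A 2 2*A 3 1)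
- A 0 1 * (A 1 0*A 2 2*A 3 3 - A 1 0*A 2 3*A 3 2 - A 1 2*A 2 0*A 3 3 + A 1 2*A 2 3*A 3 0 + A 1 3*A 2 0*A 3 2 - A 1 3*A 2 2*A 3 0)
+ A 0 2 * (A 1 0*A 2 1*A 3 3 - A 1 0*A 2 3*A 3 1 - A 1 1*A 2 0*A 3 3 + A 1 1*A 2 3*A 3 0 + A 1 3*A 2 0*A 3 1 - A 1 3*A 2 1*A 3 0)
- A 0 3 * (A 1 0*A 2 1*A 3 2 - A 1 0*A 2 2*A 3 1 - A 1 1*A 2 0*A 3 2 + A 1 1*A 2 2*A 3 0 + A 1 2*A 2 0*A 3 1 - A 1 2*A 2 1*A 3 0) := by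
  rw [Matrix.det_succ_row_zero, Fin.sum_univ_four]
  simp [Matrix.det_fin_three, Matrix.submatrix_apply, Fin.succAbove, Fin.lt_def,
    show ((2:Fin 3).succ : Fin 4) = 3 from rfl, show Fin.castSucc (2:Fin 3) = (2:Fin 4) from rfl,
    show ((3:Fin 4):ℕ) = 3 from rfl]
  ring

set_option maxHeartbeats 1000000 in
private lemma stepA (c d g r e f h k : ℂ) (u : Fin 4 → ℂ) (hu0 : ∀ j, u j ≠ 0) :
    Matrix.det (Matrix.of fun i j =>
      ![g * (r * (u i * u i)) * (1 - r * (u i * u i)),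
        r * (u i * u i) * (h - c * d * (r * (u i * u i) + r * (u i * u i)⁻¹) + k * r ^ 2),
        -(e + f * r ^ 2),
        -(r * (u i * u i)⁻¹) * (c + d * (r * (u i * u i)))] j) =
    -(c * g * r^4) * (e + f * r^2) * (h + k * r^2 - c * d) *
      ((u 0 * u 1 * u 2 * u 3)^2)⁻¹ *
      ((u 0^2 - u 1^2)*(u 0^2 - u 2^2)*(u 0^2 - u 3^2)*(u 1^2 - u 2^2)*(u 1^2 - u 3^2)*(u 2^2 - u 3^2)) := by
  set v : Fin 4 → ℂ := fun i => u i * u i with hv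
  have hv0 : ∀ i, v i ≠ 0 := fun i => mul_ne_zero (hu0 i) (hu0 i)
  set Cm : Matrix (Fin 4) (Fin 4) ℂ :=
    !![0, 0, 0, -(c*r);
       0, -(c*d*r^2), -(e+f*r^2), -(d*r^2);
       g*r, r*(h+k*r^2), 0, 0;
       -(g*r^2), -(c*d*r^2), 0, 0] with hCm
  have hM : (Matrix.of fun i j =>
      ![g * (r * (u i * u i)) * (1 - r * (u i * u i)),
        r * (u i * u i) * (h - c * d * (r * (u i * u i) + r * (u i * u i)⁻¹) + k * r ^ 2),
        -(e + f * r ^ 2),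
        -(r * (u i * u i)⁻¹) * (c + d * (r * (u i * u i)))] j : Matrix (Fin 4) (Fin 4) ℂ) =
      Matrix.diagonal (fun i => (v i)⁻¹) * Matrix.vandermonde v * Cm := by
    ext i j
    have hvi := hv0 i
    have hui := hu0 i
    fin_cases j <;>
      simp [Matrix.mul_apply, Fin.sum_univ_four, Matrix.vandermonde, Matrix.diagonal, hCm,
          hv, Matrix.vecHead, Matrix.vecTail, show ((0:Fin 4):ℕ) = 0 from rfl, show ((1:Fin 4):ℕ) = 1 from rfl,
          show ((2:Fin 4):ℕ) = 2 from rfl, show ((3:Fin 4):ℕ) = 3 from rfl]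
    all_goals try field_simp
    all_goals ring
  rw [hM, Matrix.det_mul, Matrix.det_mul]
  have hW : (Matrix.vandermonde v).det =
      (v 1 - v 0)*(v 2 - v 0)*(v 3 - v 0)*(v 2 - v 1)*(v 3 - v 1)*(v 3 - v 2) := by
    rw [det_fin_four']
    simp [Matrix.vandermonde, show ((0:Fin 4):ℕ) = 0 from rfl, show ((1:Fin 4):ℕ) = 1 from rfl,
      show ((2:Fin 4):ℕ) = 2 from rfl, show ((3:Fin 4):ℕ) = 3 from rfl]
    ring
  have hCdet : Cm.det = -(c*g*r^4*(e+f*r^2)*(h+k*r^2-c*d)) := by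
    rw [det_fin_four']
    simp [hCm, Matrix.vecHead, Matrix.vecTail]
    ring
  have hD : (Matrix.diagonal fun i => (v i)⁻¹).det = ((u 0*u 1*u 2*u 3)^2)⁻¹ := by
    rw [Matrix.det_diagonal, Fin.prod_univ_four, ← mul_inv, ← mul_inv, ← mul_inv]
    congr 1
    simp [hv]
    ring
  rw [hW, hCdet, hD]
  simp only [hv]
  ring

private lemma sin_half_aux (x y : ℝ) : ((Real.sin ((x - y)/2) : ℝ) : ℂ) =
    (Complex.exp (Complex.I * ((x/2:ℝ):ℂ)) * (Complex.exp (Complex.I * ((y/2:ℝ):ℂ)))⁻¹ -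
     Complex.exp (Complex.I * ((y/2:ℝ):ℂ)) * (Complex.exp (Complex.I * ((x/2:ℝ):ℂ)))⁻¹) / (2*Complex.I) := by
  rw [Complex.ofReal_sin, Complex.sin]
  rw [show (-(((x - y)/2 : ℝ):ℂ) * Complex.I) = -(Complex.I * ((x/2:ℝ):ℂ) - Complex.I * ((y/2:ℝ):ℂ)) by push_cast; ring,
      show ((((x - y)/2 : ℝ):ℂ) * Complex.I) = Complex.I * ((x/2:ℝ):ℂ) - Complex.I * ((y/2:ℝ):ℂ) by push_cast; ring,
      Complex.exp_neg, Complex.exp_sub]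
  have h1 := Complex.exp_ne_zero (Complex.I * ((x/2:ℝ):ℂ))
  have h2 := Complex.exp_ne_zero (Complex.I * ((y/2:ℝ):ℂ))
  field_simp
  ring_nf
  simp [Complex.I_sq]

private lemma sinprod_aux (u0 u1 u2 u3 : ℂ) (h0 : u0 ≠ 0) (h1 : u1 ≠ 0) (h2 : u2 ≠ 0) (h3 : u3 ≠ 0) :
    ((u0 * u1⁻¹ - u1 * u0⁻¹)/(2*Complex.I)) * ((u0 * u2⁻¹ - u2 * u0⁻¹)/(2*Complex.I)) *
    ((u0 * u3⁻¹ - u3 * u0⁻¹)/(2*Complex.I)) * ((u1 * u2⁻¹ - u2 * u1⁻¹)/(2*Complex.I)) *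
    ((u1 * u3⁻¹ - u3 * u1⁻¹)/(2*Complex.I)) * ((u2 * u3⁻¹ - u3 * u2⁻¹)/(2*Complex.I)) =
    -(1/64) * ((u0^2 - u1^2)*(u0^2-u2^2)*(u0^2-u3^2)*(u1^2-u2^2)*(u1^2-u3^2)*(u2^2-u3^2)) *
      ((u0*u1*u2*u3)^3)⁻¹ := by
  have h64 : ((2:ℂ)*Complex.I)^6 = -64 := by rw [mul_pow]; norm_num [pow_succ, Complex.I_sq]
  rw [div_mul_div_comm, div_mul_div_comm, div_mul_div_comm, div_mul_div_comm, div_mul_div_comm,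
    show (2*Complex.I)*(2*Complex.I)*(2*Complex.I)*(2*Complex.I)*(2*Complex.I)*(2*Complex.I) = ((2:ℂ)*Complex.I)^6 by ring, h64]
  field_simp

set_option maxHeartbeats 1000000 in
/-- Determinant formula for the 4×4 matrix whose rows are `y_{α_j}` with
`α_j = r e^{iθ_j}`. -/
theorem det_y_matrix_formula (a b c d e f g h k : ℝ)
    (ha : 0 < a) (hb : 0 < b) (hc : 0 < c) (hd : 0 < d) (hab : 1 < a * b)
    (hg : g = Real.sqrt (a * c * d))
    (he : e = a * (c + d) * c / (a * b - 1))
    (hf : f = a * (c + d) * d / (a * b - 1))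
    (hh : h = b * e - c ^ 2) (hk : k = b * f - d ^ 2)
    (r : ℝ) (hr : 0 < r) (θ : Fin 4 → ℝ) :
    let y : ℂ → Fin 4 → ℂ := fun α =>
      ![(g : ℂ) * α * (1 - α),
        α * ((h : ℂ) - (c : ℂ) * (d : ℂ) * (α + starRingEnd ℂ α) +
          (k : ℂ) * (‖α‖ : ℂ) ^ 2),
        -((e : ℂ) + (f : ℂ) * (‖α‖ : ℂ) ^ 2),
        -(starRingEnd ℂ α) * ((c : ℂ) + (d : ℂ) * α)]
    let α : Fin 4 → ℂ := fun j => (r : ℂ) * Complex.exp (Complex.I * (θ j : ℂ))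
    Matrix.det (Matrix.of fun i j => y (α i) j) =
      ((64 * a * c * Real.sqrt (a * c * d) * r ^ 4 * (c + d) * (c + d * r ^ 2) *
          (c * (c + d) + d * (a * b * c + d) * r ^ 2) / (a * b - 1) ^ 2 : ℝ) : ℂ) *
        Complex.exp (Complex.I * (((θ 0 + θ 1 + θ 2 + θ 3) / 2 : ℝ) : ℂ)) *
        ((Real.sin ((θ 0 - θ 1) / 2) : ℂ) * (Real.sin ((θ 0 - θ 2) / 2) : ℂ) *
          (Real.sin ((θ 0 - θ 3) / 2) : ℂ) * (Real.sin ((θ 1 - θ 2) / 2) : ℂ) *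
          (Real.sin ((θ 1 - θ 3) / 2) : ℂ) * (Real.sin ((θ 2 - θ 3) / 2) : ℂ)) := by
  intro y α
  have hab1 : (a*b - 1 : ℝ) ≠ 0 := by nlinarith
  set u : Fin 4 → ℂ := fun j => Complex.exp (Complex.I * ((θ j / 2 : ℝ):ℂ)) with hu
  have hu0 : ∀ j, u j ≠ 0 := fun j => Complex.exp_ne_zero _
  have hz : ∀ j, Complex.exp (Complex.I * ((θ j : ℝ):ℂ)) = u j * u j := by
    intro j
    rw [show Complex.I * ((θ j : ℝ):ℂ) =
        Complex.I * ((θ j/2 : ℝ):ℂ) + Complex.I * ((θ j/2 : ℝ):ℂ) from by push_cast; ring,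
      Complex.exp_add, hu]
  have hconj : ∀ j, (starRingEnd ℂ) ((r:ℂ) * Complex.exp (Complex.I * ((θ j:ℝ):ℂ))) =
      (r:ℂ) * (u j * u j)⁻¹ := by
    intro j
    rw [map_mul, Complex.conj_ofReal, ← Complex.exp_conj,
      show (starRingEnd ℂ) (Complex.I * ((θ j:ℝ):ℂ)) = -(Complex.I * ((θ j:ℝ):ℂ)) by
        simp [map_mul, Complex.conj_ofReal],
      Complex.exp_neg, hz]
  have habs : ∀ j, ((‖(r:ℂ) * Complex.exp (Complex.I * ((θ j:ℝ):ℂ))‖ : ℝ) : ℂ) = (r:ℂ) := by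
    intro j
    rw [norm_mul, Complex.norm_exp]
    simp [Complex.mul_re, abs_of_pos hr]
  have hsin : ∀ i j : Fin 4, ((Real.sin ((θ i - θ j)/2):ℝ):ℂ) =
      (u i * (u j)⁻¹ - u j * (u i)⁻¹)/(2*Complex.I) := by
    intro i j
    rw [hu]
    exact sin_half_aux (θ i) (θ j)
  have hsum : Complex.exp (Complex.I * (((θ 0 + θ 1 + θ 2 + θ 3)/2 : ℝ):ℂ)) =
      u 0 * u 1 * u 2 * u 3 := by
    rw [show Complex.I * (((θ 0 + θ 1 + θ 2 + θ 3)/2 : ℝ):ℂ) =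
        Complex.I * ((θ 0/2:ℝ):ℂ) + Complex.I * ((θ 1/2:ℝ):ℂ) +
        Complex.I * ((θ 2/2:ℝ):ℂ) + Complex.I * ((θ 3/2:ℝ):ℂ) from by push_cast; ring,
      Complex.exp_add, Complex.exp_add, Complex.exp_add, hu]
  have hM : (Matrix.of fun i j => y (α i) j) = Matrix.of fun i j =>
      ![(g:ℂ) * ((r:ℂ) * (u i * u i)) * (1 - (r:ℂ) * (u i * u i)),
        (r:ℂ) * (u i * u i) * ((h:ℂ) - (c:ℂ) * (d:ℂ) * ((r:ℂ) * (u i * u i) + (r:ℂ) * (u i * u i)⁻¹) + (k:ℂ) * (r:ℂ) ^ 2),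
        -((e:ℂ) + (f:ℂ) * (r:ℂ) ^ 2),
        -((r:ℂ) * (u i * u i)⁻¹) * ((c:ℂ) + (d:ℂ) * ((r:ℂ) * (u i * u i)))] j := by
    ext i j
    fin_cases j <;>
      simp only [y, α, Matrix.of_apply, Matrix.cons_val', Matrix.cons_val_zero,
        Matrix.cons_val_one, Matrix.cons_val_two, Matrix.cons_val_three, Matrix.head_cons,
        Matrix.tail_cons, Matrix.empty_val', Matrix.cons_val_fin_one, Matrix.head_fin_const,
        Fin.isValue, hconj, habs]
    all_goals simp only [hz]
    all_goals ring
  rw [hM, stepA (c:ℂ) (d:ℂ) (g:ℂ) (r:ℂ) (e:ℂ) (f:ℂ) (h:ℂ) (k:ℂ) u hu0,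
    hsum, hsin 0 1, hsin 0 2, hsin 0 3, hsin 1 2, hsin 1 3, hsin 2 3,
    sinprod_aux (u 0) (u 1) (u 2) (u 3) (hu0 0) (hu0 1) (hu0 2) (hu0 3)]
  have hscal : ((64 * a * c * Real.sqrt (a * c * d) * r ^ 4 * (c + d) * (c + d * r ^ 2) *
      (c * (c + d) + d * (a * b * c + d) * r ^ 2) / (a * b - 1) ^ 2 : ℝ) : ℂ) =
      64 * ((c:ℂ) * (g:ℂ) * (r:ℂ)^4 * ((e:ℂ) + (f:ℂ) * (r:ℂ)^2) *
        ((h:ℂ) + (k:ℂ) * (r:ℂ)^2 - (c:ℂ) * (d:ℂ))) := by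
    have hre : (64 * a * c * Real.sqrt (a * c * d) * r ^ 4 * (c + d) * (c + d * r ^ 2) *
        (c * (c + d) + d * (a * b * c + d) * r ^ 2) / (a * b - 1) ^ 2 : ℝ) =
        64 * (c * g * r^4 * (e + f * r^2) * (h + k * r^2 - c * d)) := by
      subst hh hk he hf hg
      field_simp
      ring
    rw [hre]
    push_cast
    ring
  rw [hscal]
  have hU : u 0 * u 1 * u 2 * u 3 ≠ 0 := by
    exact mul_ne_zero (mul_ne_zero (mul_ne_zero (hu0 0) (hu0 1)) (hu0 2)) (hu0 3)
  generalize u 0 * u 1 * u 2 * u 3 = U at hU ⊢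
  field_simp
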